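/- Let (ξ_n)_{n≥1} be i.i.d. fair coin tosses with values in {H,T}, Pr(ξ=H)=Pr(ξ=T)=1/2, and let B_1 = THH, B_2 = HTH, B_3 = HHT. Suppose the initial pattern A = H is given (so ξ_0 = H and the observed sequence is ξ_0, ξ_1, ξ_2, …). Let τ_i = min{k ≥ 0 : B_i is a contiguous subpattern of ξ_0ξ_1…ξ_k} and τ = min(τ_1, τ_2, τ_3). Then Pr(τ = τ_1) = 1/6, Pr(τ = τ_2) = 1/3, and Pr(τ = τ_3) = 1/2. -/

import Mathlib

open MeasureTheory ProbabilityTheory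

/-- The two-letter alphabet of coin outcomes: heads `H` and tails `T`. -/
inductive Coin : Type
  | H : Coin
  | T : Coin
  deriving DecidableEq

instance : Fintype Coin := ⟨{Coin.H, Coin.T}, fun x => by cases x <;> simp⟩

instance : MeasurableSpace Coin := ⊤

/-- The word `a₁…a_{l-1}ξ₀ξ₁…ξ_k = A ++ ξ₁…ξ_k` observed at time `k`, given the initial
pattern `A` (with `ξ₀ = a_l` the last letter of `A`; here `ξ i` denotes the `(i+1)`-st
toss after the initial pattern). -/
def obsWord {Ω : Type*} (A : List Coin) (ξ : ℕ → Ω → Coin) (k : ℕ) (ω : Ω) : List Coin :=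
  A ++ List.ofFn fun i : Fin k => ξ i ω

/-- The first `k ≥ 0` such that the pattern `Bp` occurs as a contiguous subpattern of
`a₁…a_{l-1}ξ₀ξ₁…ξ_k`. -/
noncomputable def hitTime {Ω : Type*} (A Bp : List Coin) (ξ : ℕ → Ω → Coin) (ω : Ω) : ℕ :=
  sInf {k : ℕ | Bp <:+: obsWord A ξ k ω}

set_option linter.unnecessarySimpa false
set_option linter.unusedSectionVars false

namespace CoinAux
open Coin

abbrev pTHH : List Coin := [T, H, H]
abbrev pHTH : List Coin := [H, T, H]
abbrev pHHT : List Coin := [H, H, T]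

def tpow (n : ℕ) : List Coin := List.replicate n T

@[simp] lemma tpow_zero : tpow 0 = [] := rfl
@[simp] lemma tpow_succ (n : ℕ) : tpow (n+1) = T :: tpow n := rfl
lemma tpow_succ' (n : ℕ) : tpow (n+1) = tpow n ++ [T] := List.replicate_succ'
@[simp] lemma tpow_length (n : ℕ) : (tpow n).length = n := List.length_replicate

lemma not_infix_cons {P : List Coin} {a : Coin} {l : List Coin}
    (h1 : ¬ P <+: a :: l) (h2 : ¬ P <:+: l) : ¬ P <:+: a :: l := by
  rw [List.infix_cons_iff]; tauto

lemma hth_tpow {v : List Coin} (h : ¬ pHTH <:+: v) : ∀ c, ¬ pHTH <:+: tpow c ++ v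
  | 0 => by simpa using h
  | c+1 => by
      refine not_infix_cons ?_ (hth_tpow h c)
      intro hp
      exact Coin.noConfusion (List.cons_prefix_cons.1 hp).1

lemma hht_tpow {v : List Coin} (h : ¬ pHHT <:+: v) : ∀ c, ¬ pHHT <:+: tpow c ++ v
  | 0 => by simpa using h
  | c+1 => by
      refine not_infix_cons ?_ (hht_tpow h c)
      intro hp
      exact Coin.noConfusion (List.cons_prefix_cons.1 hp).1

lemma thh_tpow {v : List Coin} (h : ¬ pTHH <:+: v) (h2 : ¬ [H, H] <+: v) :
    ∀ c, ¬ pTHH <:+: tpow c ++ v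
  | 0 => by simpa using h
  | c+1 => by
      refine not_infix_cons ?_ (thh_tpow h h2 c)
      intro hp
      have h1 : [H, H] <+: tpow c ++ v := (List.cons_prefix_cons.1 hp).2
      cases c with
      | zero => exact h2 (by simpa using h1)
      | succ c => exact Coin.noConfusion (List.cons_prefix_cons.1 h1).1

lemma hth_step {c : ℕ} {v : List Coin} (h : ¬ pHTH <:+: v) :
    ¬ pHTH <:+: [H, T, T] ++ (tpow c ++ v) := by
  have : ([H, T, T] : List Coin) ++ (tpow c ++ v) = H :: (tpow (c+2) ++ v) := by
    simp [tpow, List.replicate_succ]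
  rw [this]
  refine not_infix_cons ?_ (hth_tpow h (c+2))
  intro hp
  have h1 := (List.cons_prefix_cons.1 hp).2
  -- [T, H] <+: tpow (c+2) ++ v  → T = T then [H] <+: tpow (c+1) ++ v
  have h2 := (List.cons_prefix_cons.1 (by simpa [tpow, List.replicate_succ] using h1 :
      ([T, H] : List Coin) <+: T :: (tpow (c+1) ++ v))).2
  have h3 := (List.cons_prefix_cons.1 (by simpa [tpow, List.replicate_succ] using h2 :
      ([H] : List Coin) <+: T :: (tpow c ++ v))).1
  exact Coin.noConfusion h3

lemma hht_step {c : ℕ} {v : List Coin} (h : ¬ pHHT <:+: v) :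
    ¬ pHHT <:+: [H, T, T] ++ (tpow c ++ v) := by
  have : ([H, T, T] : List Coin) ++ (tpow c ++ v) = H :: (tpow (c+2) ++ v) := by
    simp [tpow, List.replicate_succ]
  rw [this]
  refine not_infix_cons ?_ (hht_tpow h (c+2))
  intro hp
  have h1 := (List.cons_prefix_cons.1 hp).2
  have h2 := (List.cons_prefix_cons.1 (by simpa [tpow, List.replicate_succ] using h1 :
      ([H, T] : List Coin) <+: T :: (tpow (c+1) ++ v))).1
  exact Coin.noConfusion h2

lemma thh_step {c : ℕ} {v : List Coin} (h : ¬ pTHH <:+: v) (h2 : ¬ [H, H] <+: v) :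
    ¬ pTHH <:+: [H, T, T] ++ (tpow c ++ v) := by
  have : ([H, T, T] : List Coin) ++ (tpow c ++ v) = H :: (tpow (c+2) ++ v) := by
    simp [tpow, List.replicate_succ]
  rw [this]
  refine not_infix_cons ?_ (thh_tpow h h2 (c+2))
  intro hp
  exact Coin.noConfusion (List.cons_prefix_cons.1 hp).1

lemma hh_not_prefix {x : List Coin} : ¬ [H, H] <+: [H, T, T] ++ x := by
  intro hp
  exact Coin.noConfusion (List.cons_prefix_cons.1 (List.cons_prefix_cons.1 hp).2).1

end CoinAux

namespace CoinAux
open Coin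

/-- body of family-1 words -/
def body1 : List ℕ → ℕ → List Coin
  | [], a => tpow a ++ [H, H]
  | b :: L, a => tpow b ++ ([H, T, T] ++ body1 L a)

def u1 (L : List ℕ) (a : ℕ) : List Coin := [H, T, T] ++ body1 L a

lemma u1_nil (a : ℕ) : u1 [] a = [H, T, T] ++ (tpow a ++ [H, H]) := rfl
lemma u1_cons (b : ℕ) (L : List ℕ) (a : ℕ) :
    u1 (b :: L) a = [H, T, T] ++ (tpow b ++ u1 L a) := by
  simp [u1, body1]

lemma u1_shape (L : List ℕ) (a : ℕ) : ∃ r, u1 L a = H :: T :: T :: r := ⟨body1 L a, rfl⟩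

lemma u1_not_hth (L : List ℕ) (a : ℕ) : ¬ pHTH <:+: u1 L a := by
  induction L generalizing a with
  | nil => rw [u1_nil]; exact hth_step (by decide)
  | cons b L ih => rw [u1_cons]; exact hth_step (ih a)

lemma u1_not_hht (L : List ℕ) (a : ℕ) : ¬ pHHT <:+: u1 L a := by
  induction L generalizing a with
  | nil => rw [u1_nil]; exact hht_step (by decide)
  | cons b L ih => rw [u1_cons]; exact hht_step (ih a)

lemma u1_dropLast_nil (a : ℕ) : (u1 [] a).dropLast = [H, T, T] ++ (tpow a ++ [H]) := by
  have : u1 [] a = ([H, T, T] ++ (tpow a ++ [H])) ++ [H] := by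
    rw [u1_nil]; simp
  rw [this, List.dropLast_concat]

lemma u1_ne_nil (L : List ℕ) (a : ℕ) : u1 L a ≠ [] := by
  obtain ⟨r, hr⟩ := u1_shape L a; simp [hr]

lemma u1_dropLast_cons (b : ℕ) (L : List ℕ) (a : ℕ) :
    (u1 (b :: L) a).dropLast = [H, T, T] ++ (tpow b ++ (u1 L a).dropLast) := by
  rw [u1_cons, ← List.append_assoc,
    List.dropLast_append_of_ne_nil (u1_ne_nil L a), List.append_assoc]

lemma u1_dropLast_shape (L : List ℕ) (a : ℕ) : ∃ r, (u1 L a).dropLast = H :: T :: r := by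
  cases L with
  | nil => exact ⟨T :: (tpow a ++ [H]), by rw [u1_dropLast_nil]; rfl⟩
  | cons b L => exact ⟨T :: (tpow b ++ (u1 L a).dropLast), by rw [u1_dropLast_cons]; rfl⟩

lemma u1_dropLast_not_thh (L : List ℕ) (a : ℕ) : ¬ pTHH <:+: (u1 L a).dropLast := by
  induction L generalizing a with
  | nil => rw [u1_dropLast_nil]; exact thh_step (by decide) (by decide)
  | cons b L ih =>
      rw [u1_dropLast_cons]
      refine thh_step (ih a) ?_
      obtain ⟨r, hr⟩ := u1_dropLast_shape L a
      rw [hr]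
      intro hp
      exact Coin.noConfusion (List.cons_prefix_cons.1 (List.cons_prefix_cons.1 hp).2).1

lemma u1_thh (L : List ℕ) (a : ℕ) : ∃ s, u1 L a = s ++ pTHH := by
  induction L generalizing a with
  | nil =>
      refine ⟨[H, T] ++ tpow a, ?_⟩
      rw [u1_nil]
      have : T :: tpow a = tpow a ++ [T] := by
        simpa [tpow, List.replicate_succ] using tpow_succ' a
      simp only [List.append_assoc, List.cons_append, List.nil_append]
      rw [show (T :: (tpow a ++ [H, H]) : List Coin) = (T :: tpow a) ++ [H, H] by simp,
        this]
      simp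
  | cons b L ih =>
      obtain ⟨s, hs⟩ := ih a
      exact ⟨[H, T, T] ++ tpow b ++ s, by rw [u1_cons, hs]; simp⟩

lemma u1_length (L : List ℕ) (a : ℕ) :
    (u1 L a).length = 5 + a + (L.map (· + 3)).sum := by
  induction L generalizing a with
  | nil => simp [u1, body1]; omega
  | cons b L ih => rw [u1_cons]; simp [ih a]; omega

/-- first-H-position helper for injectivity -/
lemma tpow_H_inj {r r' : List Coin} : ∀ {c c' : ℕ},
    tpow c ++ (H :: r) = tpow c' ++ (H :: r') → c = c' ∧ r = r'
  | 0, 0, h => by simpa using h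
  | 0, c'+1, h => by simp [tpow, List.replicate_succ] at h
  | c+1, 0, h => by simp [tpow, List.replicate_succ] at h
  | c+1, c'+1, h => by
      simp only [tpow_succ, List.cons_append, List.cons.injEq] at h
      obtain ⟨h1, h2⟩ := tpow_H_inj (r := r) (r' := r') h.2
      exact ⟨by omega, h2⟩

lemma body1_eq_tpow_H : ∀ (L : List ℕ) (a : ℕ), ∃ c r, body1 L a = tpow c ++ (H :: r) ∧
    ((L = [] ∧ c = a ∧ r = [H]) ∨ (∃ b L', L = b :: L' ∧ c = b ∧ r = T :: T :: body1 L' a)) := by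
  intro L a
  cases L with
  | nil => exact ⟨a, [H], rfl, Or.inl ⟨rfl, rfl, rfl⟩⟩
  | cons b L' => exact ⟨b, T :: T :: body1 L' a, rfl, Or.inr ⟨b, L', rfl, rfl, rfl⟩⟩

lemma body1_inj : ∀ (L L' : List ℕ) (a a' : ℕ), body1 L a = body1 L' a' → L = L' ∧ a = a' := by
  intro L
  induction L with
  | nil =>
      intro L' a a' h
      cases L' with
      | nil =>
          simp only [body1] at h
          have := tpow_H_inj (c := a) (c' := a') (r := [H]) (r' := [H]) (by simpa using h)
          exact ⟨rfl, this.1⟩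
      | cons b L'' =>
          simp only [body1] at h
          have := tpow_H_inj (c := a) (c' := b) (r := [H]) (r' := T :: T :: body1 L'' a')
            (by simpa using h)
          exact absurd this.2 (by simp)
  | cons b L ih =>
      intro L' a a' h
      cases L' with
      | nil =>
          simp only [body1] at h
          have := tpow_H_inj (c := b) (c' := a') (r := T :: T :: body1 L a) (r' := [H])
            (by simpa using h)
          exact absurd this.2 (by simp)
      | cons b' L'' =>
          simp only [body1] at h
          have := tpow_H_inj (c := b) (c' := b') (r := T :: T :: body1 L a)
            (r' := T :: T :: body1 L'' a') (by simpa using h)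
          obtain ⟨h1, h2⟩ := this
          simp only [List.cons.injEq, true_and] at h2
          obtain ⟨hL, ha⟩ := ih L'' a a' h2
          exact ⟨by rw [h1, hL], ha⟩

lemma u1_inj {L L' : List ℕ} {a a' : ℕ} (h : u1 L a = u1 L' a') : L = L' ∧ a = a' :=
  body1_inj L L' a a' (by simpa [u1] using h)

end CoinAux

namespace CoinAux
open Coin

def body2 : List ℕ → ℕ → List Coin
  | [], a => tpow a ++ [H, T, H]
  | b :: L, a => tpow b ++ ([H, T, T] ++ body2 L a)

def u2 (L : List ℕ) (a : ℕ) : List Coin := [H, T, T] ++ body2 L a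

lemma u2_nil (a : ℕ) : u2 [] a = [H, T, T] ++ (tpow a ++ [H, T, H]) := rfl
lemma u2_cons (b : ℕ) (L : List ℕ) (a : ℕ) :
    u2 (b :: L) a = [H, T, T] ++ (tpow b ++ u2 L a) := by
  simp [u2, body2]

lemma u2_shape (L : List ℕ) (a : ℕ) : ∃ r, u2 L a = H :: T :: T :: r := ⟨body2 L a, rfl⟩

lemma u2_not_hht (L : List ℕ) (a : ℕ) : ¬ pHHT <:+: u2 L a := by
  induction L generalizing a with
  | nil => rw [u2_nil]; exact hht_step (by decide)
  | cons b L ih => rw [u2_cons]; exact hht_step (ih a)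

lemma u2_not_thh (L : List ℕ) (a : ℕ) : ¬ pTHH <:+: u2 L a := by
  induction L generalizing a with
  | nil => rw [u2_nil]; exact thh_step (by decide) (by decide)
  | cons b L ih =>
      rw [u2_cons]
      refine thh_step (ih a) ?_
      obtain ⟨r, hr⟩ := u2_shape L a
      rw [hr]
      intro hp
      exact Coin.noConfusion (List.cons_prefix_cons.1 (List.cons_prefix_cons.1 hp).2).1

lemma u2_dropLast_nil (a : ℕ) : (u2 [] a).dropLast = [H, T, T] ++ (tpow a ++ [H, T]) := by
  have : u2 [] a = ([H, T, T] ++ (tpow a ++ [H, T])) ++ [H] := by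
    rw [u2_nil]; simp
  rw [this, List.dropLast_concat]

lemma u2_ne_nil (L : List ℕ) (a : ℕ) : u2 L a ≠ [] := by
  obtain ⟨r, hr⟩ := u2_shape L a; simp [hr]

lemma u2_dropLast_cons (b : ℕ) (L : List ℕ) (a : ℕ) :
    (u2 (b :: L) a).dropLast = [H, T, T] ++ (tpow b ++ (u2 L a).dropLast) := by
  rw [u2_cons, ← List.append_assoc,
    List.dropLast_append_of_ne_nil (u2_ne_nil L a), List.append_assoc]

lemma u2_dropLast_not_hth (L : List ℕ) (a : ℕ) : ¬ pHTH <:+: (u2 L a).dropLast := by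
  induction L generalizing a with
  | nil => rw [u2_dropLast_nil]; exact hth_step (by decide)
  | cons b L ih => rw [u2_dropLast_cons]; exact hth_step (ih a)

lemma u2_hth (L : List ℕ) (a : ℕ) : ∃ s, u2 L a = s ++ pHTH := by
  induction L generalizing a with
  | nil => exact ⟨[H, T, T] ++ tpow a, by rw [u2_nil]; simp⟩
  | cons b L ih =>
      obtain ⟨s, hs⟩ := ih a
      exact ⟨[H, T, T] ++ tpow b ++ s, by rw [u2_cons, hs]; simp⟩

lemma u2_length (L : List ℕ) (a : ℕ) :
    (u2 L a).length = 6 + a + (L.map (· + 3)).sum := by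
  induction L generalizing a with
  | nil => simp [u2, body2]; omega
  | cons b L ih => rw [u2_cons]; simp [ih a]; omega

lemma body2_inj : ∀ (L L' : List ℕ) (a a' : ℕ), body2 L a = body2 L' a' → L = L' ∧ a = a' := by
  intro L
  induction L with
  | nil =>
      intro L' a a' h
      cases L' with
      | nil =>
          simp only [body2] at h
          have := tpow_H_inj (c := a) (c' := a') (r := [T, H]) (r' := [T, H]) (by simpa using h)
          exact ⟨rfl, this.1⟩
      | cons b L'' =>
          simp only [body2] at h
          have := tpow_H_inj (c := a) (c' := b) (r := [T, H]) (r' := T :: T :: body2 L'' a')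
            (by simpa using h)
          obtain ⟨-, h2⟩ := this
          simp only [List.cons.injEq] at h2
          obtain ⟨-, h3, -⟩ := h2
          exact Coin.noConfusion h3
  | cons b L ih =>
      intro L' a a' h
      cases L' with
      | nil =>
          simp only [body2] at h
          have := tpow_H_inj (c := b) (c' := a') (r := T :: T :: body2 L a) (r' := [T, H])
            (by simpa using h)
          obtain ⟨-, h2⟩ := this
          simp only [List.cons.injEq] at h2
          obtain ⟨-, h3, -⟩ := h2
          exact Coin.noConfusion h3.symm
      | cons b' L'' =>
          simp only [body2] at h
          have := tpow_H_inj (c := b) (c' := b') (r := T :: T :: body2 L a)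
            (r' := T :: T :: body2 L'' a') (by simpa using h)
          obtain ⟨h1, h2⟩ := this
          simp only [List.cons.injEq, true_and] at h2
          obtain ⟨hL, ha⟩ := ih L'' a a' h2
          exact ⟨by rw [h1, hL], ha⟩

lemma u2_inj {L L' : List ℕ} {a a' : ℕ} (h : u2 L a = u2 L' a') : L = L' ∧ a = a' :=
  body2_inj L L' a a' (by simpa [u2] using h)

/-! family 3 -/

def u3 (n : ℕ) : List Coin := List.replicate (n+2) H ++ [T]

lemma u3_hht (n : ℕ) : ∃ s, u3 n = s ++ pHHT := by
  refine ⟨List.replicate n H, ?_⟩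
  have : List.replicate (n+2) H = List.replicate n H ++ [H, H] := by
    rw [show n + 2 = n + 2 from rfl, List.replicate_add]
    rfl
  rw [u3, this]
  simp

lemma u3_dropLast (n : ℕ) : (u3 n).dropLast = List.replicate (n+2) H :=
  List.dropLast_concat

lemma not_infix_replicate_H {P : List Coin} (hT : T ∈ P) (m : ℕ) :
    ¬ P <:+: List.replicate m H := by
  intro hi
  have := hi.sublist.subset hT
  have := List.eq_of_mem_replicate this
  exact Coin.noConfusion this

lemma u3_dropLast_not_hht (n : ℕ) : ¬ pHHT <:+: (u3 n).dropLast := by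
  rw [u3_dropLast]
  exact not_infix_replicate_H (by decide) _

lemma thh_repH : ∀ m, ¬ pTHH <:+: List.replicate m H ++ [T]
  | 0 => by decide
  | m+1 => by
      rw [List.replicate_succ, List.cons_append]
      refine not_infix_cons ?_ (thh_repH m)
      intro hp
      exact Coin.noConfusion (List.cons_prefix_cons.1 hp).1

lemma hth_repH : ∀ m, ¬ pHTH <:+: List.replicate m H ++ [T]
  | 0 => by decide
  | m+1 => by
      rw [List.replicate_succ, List.cons_append]
      refine not_infix_cons ?_ (hth_repH m)
      intro hp
      have h1 := (List.cons_prefix_cons.1 hp).2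
      cases m with
      | zero =>
          have := h1.length_le
          simp at this
      | succ m =>
          rw [List.replicate_succ, List.cons_append] at h1
          exact Coin.noConfusion (List.cons_prefix_cons.1 h1).1

lemma u3_not_thh (n : ℕ) : ¬ pTHH <:+: u3 n := thh_repH _
lemma u3_not_hth (n : ℕ) : ¬ pHTH <:+: u3 n := hth_repH _

lemma u3_length (n : ℕ) : (u3 n).length = n + 3 := by simp [u3]

end CoinAux

namespace CoinAux
open Coin

variable {Ω : Type*} (ξ : ℕ → Ω → Coin)

def Cyl (v : List Coin) : Set Ω := {ω | ∀ i, i < v.length → ξ i ω = v.getD i H}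

variable {ξ}

lemma obs_take {v : List Coin} {ω : Ω} (hc : ω ∈ Cyl ξ v) {j : ℕ} (hj : j ≤ v.length) :
    obsWord [H] ξ j ω = H :: v.take j := by
  have : (List.ofFn fun i : Fin j => ξ i ω) = v.take j := by
    apply List.ext_getElem
    · simp [hj]
    · intro i h1 h2
      simp only [List.getElem_ofFn, List.getElem_take]
      have hi : i < v.length := lt_of_lt_of_le (by simpa using h1) hj
      rw [hc i hi, List.getD_eq_getElem v H hi]
  simp only [obsWord, this]
  rfl

lemma cons_take_prefix_dropLast {v : List Coin} (hv : v ≠ []) {j : ℕ} (hj : j < v.length) :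
    (H :: v.take j) <+: (H :: v).dropLast := by
  have hlen : (H :: v).dropLast = H :: v.take (v.length - 1) := by
    rw [List.dropLast_eq_take, List.length_cons]
    simp only [Nat.add_sub_cancel]
    cases v with
    | nil => simp at hv
    | cons a l => simp [List.take_succ_cons, List.dropLast_eq_take]
  rw [hlen, List.cons_prefix_cons]
  exact ⟨rfl, List.take_prefix_take_left (by omega)⟩

lemma not_mem_S_of_lt {P v : List Coin} {ω : Ω} (hc : ω ∈ Cyl ξ v) (hv : v ≠ [])
    (h2 : ¬ P <:+: (H :: v).dropLast) {j : ℕ} (hj : j < v.length) :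
    ¬ P <:+: obsWord [H] ξ j ω := by
  rw [obs_take hc (le_of_lt hj)]
  intro hP
  exact h2 (hP.trans (cons_take_prefix_dropLast hv hj).isInfix)

lemma obs_full {v : List Coin} {ω : Ω} (hc : ω ∈ Cyl ξ v) :
    obsWord [H] ξ v.length ω = H :: v := by
  rw [obs_take hc le_rfl, List.take_length]

lemma hit_eq {P v : List Coin} (hv : v ≠ []) (h1 : P <:+: H :: v)
    (h2 : ¬ P <:+: (H :: v).dropLast) {ω : Ω} (hc : ω ∈ Cyl ξ v) :
    hitTime [H] P ξ ω = v.length := by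
  have hmem : v.length ∈ {k : ℕ | P <:+: obsWord [H] ξ k ω} := by
    simp only [Set.mem_setOf_eq, obs_full hc]; exact h1
  refine le_antisymm (Nat.sInf_le hmem) (le_of_not_gt fun hlt => ?_)
  have := Nat.sInf_mem (⟨_, hmem⟩ : {k : ℕ | P <:+: obsWord [H] ξ k ω}.Nonempty)
  exact not_mem_S_of_lt hc hv h2 hlt this

lemma hit_gt {Q v : List Coin} (h3 : ¬ Q <:+: H :: v) {ω : Ω} (hc : ω ∈ Cyl ξ v)
    (hne : ∃ k, Q <:+: obsWord [H] ξ k ω) :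
    v.length < hitTime [H] Q ξ ω := by
  by_contra hle
  push_neg at hle
  have hmem := Nat.sInf_mem ((Set.nonempty_def).2 hne)
  set n := hitTime [H] Q ξ ω with hn
  have hQn : Q <:+: obsWord [H] ξ n ω := hmem
  rw [obs_take hc hle] at hQn
  exact h3 (hQn.trans ((List.cons_prefix_cons.2 ⟨rfl, v.take_prefix n⟩).isInfix))

lemma obs_succ {ω : Ω} (k : ℕ) :
    obsWord [H] ξ (k+1) ω = obsWord [H] ξ k ω ++ [ξ k ω] := by
  simp only [obsWord]
  rw [List.ofFn_succ']
  simp [List.concat_eq_append]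

lemma infix_last {P l : List Coin} {x : Coin} (h : P <:+: l ++ [x]) (h2 : ¬ P <:+: l) :
    ∃ s, s ++ P = l ++ [x] := by
  obtain ⟨s, t, e⟩ := h
  induction t using List.reverseRecOn with
  | nil => exact ⟨s, by simpa using e⟩
  | append_singleton t' y _ =>
      exfalso
      rw [show s ++ P ++ (t' ++ [y]) = (s ++ P ++ t') ++ [y] by simp] at e
      have : s ++ P ++ t' = l := by
        have := congrArg List.dropLast e
        simpa [List.dropLast_concat] using this
      exact h2 ⟨s, t', this⟩

lemma hit_mem {P : List Coin} {ω : Ω} (hne : ∃ k, P <:+: obsWord [H] ξ k ω) :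
    P <:+: obsWord [H] ξ (hitTime [H] P ξ ω) ω :=
  Nat.sInf_mem ((Set.nonempty_def).2 hne)

lemma hit_lt_not {P : List Coin} {ω : Ω} {n : ℕ} (h : n < hitTime [H] P ξ ω) :
    ¬ P <:+: obsWord [H] ξ n ω :=
  Nat.notMem_of_lt_sInf h

lemma hit_ne {P Q : List Coin} (hlP : P.length = 3) (hlQ : Q.length = 3) (hPQ : P ≠ Q)
    {ω : Ω} (hP : ∃ k, P <:+: obsWord [H] ξ k ω) (hQ : ∃ k, Q <:+: obsWord [H] ξ k ω) :
    hitTime [H] P ξ ω ≠ hitTime [H] Q ξ ω := by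
  intro heq
  cases hv : hitTime [H] P ξ ω with
  | zero =>
      have hPn := hit_mem hP
      rw [hv] at hPn
      have := hPn.length_le
      simp [obsWord, hlP] at this
  | succ n' =>
      have hPn := hit_mem hP
      have hQn := hit_mem hQ
      rw [hv] at hPn
      rw [← heq, hv] at hQn
      have hPn' : ¬ P <:+: obsWord [H] ξ n' ω := hit_lt_not (by omega)
      have hQn' : ¬ Q <:+: obsWord [H] ξ n' ω := hit_lt_not (by rw [← heq]; omega)
      rw [obs_succ n'] at hPn hQn
      obtain ⟨s, hs⟩ := infix_last hPn hPn'
      obtain ⟨s', hs'⟩ := infix_last hQn hQn'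
      have hlen : s.length = s'.length := by
        have e1 := congrArg List.length hs
        have e2 := congrArg List.length hs'
        simp only [List.length_append, hlP, hlQ] at e1 e2
        omega
      have := List.append_inj (hs.trans hs'.symm) hlen
      exact hPQ this.2

lemma cyl_subset_prefix {v w : List Coin} {ω : Ω} (hv : ω ∈ Cyl ξ v) (hw : ω ∈ Cyl ξ w)
    (hle : v.length ≤ w.length) : v <+: w := by
  rw [List.prefix_iff_eq_take]
  apply List.ext_getElem (by simp [hle])
  intro i h1 h2
  have hiv : i < v.length := h1
  have hiw : i < w.length := lt_of_lt_of_le hiv hle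
  rw [List.getElem_take]
  have e1 := hv i hiv
  have e2 := hw i hiw
  rw [List.getD_eq_getElem v H hiv] at e1
  rw [List.getD_eq_getElem w H hiw] at e2
  rw [← e1, ← e2]

lemma prefix_dropLast {l m : List Coin} (h : l <+: m) (hlen : l.length < m.length) :
    l <+: m.dropLast := by
  rw [List.prefix_iff_eq_take] at h
  rw [List.dropLast_eq_take, List.prefix_iff_eq_take, List.take_take]
  have hm : min l.length (m.length - 1) = l.length := by omega
  rw [hm, ← h]

end CoinAux

namespace CoinAux
open Coin MeasureTheory ProbabilityTheory

section Meas
variable {Ω : Type*} [MeasurableSpace Ω] {μ : MeasureTheory.Measure Ω} {ξ : ℕ → Ω → Coin}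

lemma coin_measurableSet (s : Set Coin) : MeasurableSet s :=
  MeasurableSpace.measurableSet_top

lemma cyl_eq_iInter (ξ : ℕ → Ω → Coin) (v : List Coin) :
    Cyl ξ v = ⋂ i ∈ Finset.range v.length, ξ i ⁻¹' {v.getD i H} := by
  ext ω
  simp [Cyl, Set.mem_iInter]

lemma cyl_measurable (hmeas : ∀ n, Measurable (ξ n)) (v : List Coin) :
    MeasurableSet (Cyl ξ v) := by
  rw [cyl_eq_iInter]
  exact MeasurableSet.biInter (Finset.range _).countable_toSet fun i _ =>
    (hmeas i) (coin_measurableSet _)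

lemma cyl_prob [IsProbabilityMeasure μ]
    (hindep : iIndepFun ξ μ)
    (hdist : ∀ n c, μ {ω | ξ n ω = c} = 1 / 2) (v : List Coin) :
    μ (Cyl ξ v) = 2⁻¹ ^ v.length := by
  rw [cyl_eq_iInter,
    hindep.meas_biInter (fun i _ => ⟨{v.getD i H}, trivial, rfl⟩)]
  have h : ∀ i ∈ Finset.range v.length, μ (ξ i ⁻¹' {v.getD i H}) = 2⁻¹ := by
    intro i _
    have := hdist i (v.getD i H)
    rw [one_div] at this
    rw [← this]
    rfl
  rw [Finset.prod_congr rfl h, Finset.prod_const, Finset.card_range]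

lemma cyl_disjoint {v w : List Coin} (hvw : ¬ v <+: w) (hwv : ¬ w <+: v) :
    Disjoint (Cyl ξ v) (Cyl ξ w) := by
  rw [Set.disjoint_left]
  intro ω hv hw
  rcases le_total v.length w.length with h | h
  · exact hvw (cyl_subset_prefix hv hw h)
  · exact hwv (cyl_subset_prefix hw hv h)

lemma family_pairwise {ι : Type*} {P : List Coin} {word : ι → List Coin}
    (hinj : Function.Injective word)
    (hend : ∀ i, P <:+: H :: word i)
    (hdl : ∀ i, ¬ P <:+: (H :: word i).dropLast) :
    Pairwise (Function.onFun Disjoint (fun i => Cyl ξ (word i))) := by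
  have key : ∀ i j : ι, word i <+: word j → i = j := by
    intro i j hpre
    rcases lt_or_ge (word i).length (word j).length with hlt | hge
    · exfalso
      have hp1 : (H :: word i) <+: (H :: word j) := List.cons_prefix_cons.2 ⟨rfl, hpre⟩
      have hp2 := prefix_dropLast hp1 (by simpa using Nat.succ_lt_succ hlt)
      exact hdl j ((hend i).trans hp2.isInfix)
    · exact hinj (hpre.eq_of_length (le_antisymm hpre.length_le hge))
  intro i j hij
  exact cyl_disjoint (fun hp => hij (key _ _ hp)) (fun hp => hij ((key _ _ hp).symm))

lemma measurable_infix_event (hmeas : ∀ n, Measurable (ξ n)) (P : List Coin) (k : ℕ) :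
    MeasurableSet {ω : Ω | P <:+: obsWord [H] ξ k ω} := by
  have hset : {ω : Ω | P <:+: obsWord [H] ξ k ω}
      = ⋃ (v : Fin k → Coin) (_ : P <:+: [H] ++ List.ofFn v), ⋂ i : Fin k, ξ i ⁻¹' {v i} := by
    ext ω
    simp only [Set.mem_setOf_eq, Set.mem_iUnion, Set.mem_iInter, Set.mem_preimage,
      Set.mem_singleton_iff]
    constructor
    · intro h
      exact ⟨fun i => ξ i ω, h, fun i => rfl⟩
    · rintro ⟨v, hv, he⟩
      have he2 : (List.ofFn fun i : Fin k => ξ i ω) = List.ofFn v := by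
        congr 1; funext i; exact he i
      show P <:+: [H] ++ List.ofFn fun i : Fin k => ξ i ω
      rw [he2]; exact hv
  rw [hset]
  exact MeasurableSet.iUnion fun v => MeasurableSet.iUnion fun _ =>
    MeasurableSet.iInter fun i => (hmeas i) (coin_measurableSet _)

lemma natInf_eq_iff {S : Set ℕ} {n : ℕ} :
    sInf S = n ↔ (n ∈ S ∧ ∀ m, m < n → m ∉ S) ∨ (n = 0 ∧ ∀ m, m ∉ S) := by
  constructor
  · intro h
    by_cases hS : S.Nonempty
    · exact Or.inl ⟨h ▸ Nat.sInf_mem hS, fun m hm => Nat.notMem_of_lt_sInf (h ▸ hm)⟩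
    · rw [Set.not_nonempty_iff_eq_empty] at hS
      subst hS
      rw [Nat.sInf_empty] at h
      exact Or.inr ⟨h.symm, by simp⟩
  · rintro (⟨h1, h2⟩ | ⟨h0, h2⟩)
    · exact le_antisymm (Nat.sInf_le h1)
        (le_of_not_gt fun hlt => h2 _ hlt (Nat.sInf_mem ⟨n, h1⟩))
    · have hS : S = ∅ := Set.eq_empty_iff_forall_notMem.2 h2
      rw [hS, Nat.sInf_empty, h0]

lemma measurable_hitTime (hmeas : ∀ n, Measurable (ξ n)) (P : List Coin) :
    Measurable (hitTime [H] P ξ) := by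
  apply measurable_to_countable'
  intro n
  have hset : hitTime [H] P ξ ⁻¹' {n} =
      (({ω : Ω | P <:+: obsWord [H] ξ n ω} ∩
          ⋂ (m : ℕ) (_ : m < n), {ω : Ω | P <:+: obsWord [H] ξ m ω}ᶜ)
        ∪ ⋃ (_ : n = 0), ⋂ (m : ℕ), {ω : Ω | P <:+: obsWord [H] ξ m ω}ᶜ) := by
    ext ω
    simp only [Set.mem_preimage, Set.mem_singleton_iff, hitTime, Set.mem_union, Set.mem_inter_iff,
      Set.mem_iInter, Set.mem_iUnion, Set.mem_compl_iff, Set.mem_setOf_eq, natInf_eq_iff]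
    tauto
  rw [hset]
  refine MeasurableSet.union
    ((measurable_infix_event hmeas P n).inter
      (MeasurableSet.iInter fun m => MeasurableSet.iInter fun _ =>
        (measurable_infix_event hmeas P m).compl))
    (MeasurableSet.iUnion fun _ => MeasurableSet.iInter fun m =>
      (measurable_infix_event hmeas P m).compl)

lemma measurable_min_nat {f g : Ω → ℕ} (hf : Measurable f) (hg : Measurable g) :
    Measurable (fun ω => min (f ω) (g ω)) := by
  apply measurable_to_countable'
  intro n
  have : (fun ω => min (f ω) (g ω)) ⁻¹' {n} =
      ⋃ (p : ℕ × ℕ) (_ : min p.1 p.2 = n), (f ⁻¹' {p.1} ∩ g ⁻¹' {p.2}) := by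
    ext ω
    simp only [Set.mem_preimage, Set.mem_singleton_iff, Set.mem_iUnion, Set.mem_inter_iff]
    constructor
    · intro h; exact ⟨(f ω, g ω), h, rfl, rfl⟩
    · rintro ⟨⟨a, b⟩, h, h1, h2⟩; simp only [Set.mem_preimage, Set.mem_singleton_iff] at h1 h2
      rw [← h, h1, h2]
  rw [this]
  exact MeasurableSet.iUnion fun p => MeasurableSet.iUnion fun _ =>
    (hf (measurableSet_singleton _)).inter (hg (measurableSet_singleton _))

lemma inter_ae_eq {U F : Set Ω} (hFc : μ Fᶜ = 0) : μ (U ∩ F) = μ U := by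
  refine le_antisymm (measure_mono Set.inter_subset_left) ?_
  calc μ U ≤ μ (U ∩ F) + μ (U \ F) := measure_le_inter_add_diff μ U F
    _ ≤ μ (U ∩ F) + μ Fᶜ := by
        gcongr
        rw [Set.diff_eq]
        exact Set.inter_subset_right
    _ = μ (U ∩ F) := by rw [hFc, add_zero]

end Meas

/-! ### tsum computations -/

open scoped ENNReal

lemma geom_half : ∑' n : ℕ, (2⁻¹ : ℝ≥0∞) ^ n = 2 := by
  rw [ENNReal.tsum_geometric, ENNReal.one_sub_inv_two, inv_inv]

lemma h21 : (2 : ℝ≥0∞)⁻¹ * 2 = 1 :=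
  ENNReal.inv_mul_cancel (by norm_num) (by norm_num)

lemma tsum_pi_fin (g : ℕ → ℝ≥0∞) : ∀ n, ∑' v : Fin n → ℕ, ∏ i, g (v i) = (∑' b, g b) ^ n
  | 0 => by
      rw [pow_zero, tsum_eq_single (fun i => i.elim0)
        (fun b hb => absurd (Subsingleton.elim _ _) hb)]
      simp
  | n+1 => by
      calc ∑' v : Fin (n+1) → ℕ, ∏ i, g (v i)
          = ∑' p : ℕ × (Fin n → ℕ), ∏ i, g ((Fin.consEquiv fun _ => ℕ) (p.1, p.2) i) := by
            rw [(Fin.consEquiv fun _ => ℕ).tsum_eq (fun v => ∏ i, g (v i))]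
        _ = ∑' p : ℕ × (Fin n → ℕ), g p.1 * ∏ i, g (p.2 i) := by
            apply tsum_congr
            intro p
            rw [← Fin.prod_cons (g p.1) (fun i => g (p.2 i))]
            apply Finset.prod_congr rfl
            intro i _
            induction i using Fin.cases with
            | zero => rfl
            | succ i => rfl
        _ = (∑' b, g b) * (∑' v : Fin n → ℕ, ∏ i, g (v i)) := by
            rw [ENNReal.tsum_prod']
            simp_rw [ENNReal.tsum_mul_left]
            rw [ENNReal.tsum_mul_right]
        _ = (∑' b, g b) ^ (n+1) := by rw [tsum_pi_fin g n, pow_succ]; ring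

lemma tsum_list (g : ℕ → ℝ≥0∞) :
    ∑' L : List ℕ, (L.map g).prod = ∑' n : ℕ, (∑' b, g b) ^ n := by
  rw [← (List.equivSigmaTuple (α := ℕ)).symm.tsum_eq (fun L => (L.map g).prod)]
  have h1 : ∀ p : Σ n, Fin n → ℕ,
      ((List.equivSigmaTuple.symm p).map g).prod = ∏ i, g (p.2 i) := by
    rintro ⟨n, v⟩
    show ((List.ofFn v).map g).prod = _
    rw [List.map_ofFn, List.prod_ofFn]
    rfl
  calc ∑' p : Σ n, Fin n → ℕ, ((List.equivSigmaTuple.symm p).map g).prod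
      = ∑' p : Σ n, Fin n → ℕ, ∏ i, g (p.2 i) := tsum_congr h1
    _ = ∑' n : ℕ, ∑' v : Fin n → ℕ, ∏ i, g (v i) :=
        ENNReal.tsum_sigma fun n (v : Fin n → ℕ) => ∏ i, g (v i)
    _ = ∑' n : ℕ, (∑' b, g b) ^ n := tsum_congr fun n => tsum_pi_fin g n

lemma pow_list_sum (x : ℝ≥0∞) (f : ℕ → ℕ) : ∀ L : List ℕ,
    x ^ ((L.map f).sum) = (L.map fun b => x ^ f b).prod
  | [] => by simp
  | b :: L => by
      simp only [List.map_cons, List.sum_cons, List.prod_cons, pow_add]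
      rw [pow_list_sum x f L]

lemma tsum_b : ∑' b : ℕ, (2⁻¹ : ℝ≥0∞) ^ (b + 3) = 4⁻¹ := by
  have h : ∑' b : ℕ, (2⁻¹ : ℝ≥0∞) ^ (b + 3) = ∑' b : ℕ, (2⁻¹ : ℝ≥0∞) ^ b * 2⁻¹ ^ 3 :=
    tsum_congr fun b => pow_add _ _ _
  rw [h, ENNReal.tsum_mul_right, geom_half]
  calc (2:ℝ≥0∞) * 2⁻¹^3 = 2⁻¹ * 2⁻¹ * (2⁻¹ * 2) := by ring
    _ = 2⁻¹ * 2⁻¹ := by rw [h21, mul_one]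
    _ = (2 * 2 : ℝ≥0∞)⁻¹ := (ENNReal.mul_inv (by norm_num) (by norm_num)).symm
    _ = 4⁻¹ := by norm_num

lemma geom_quarter : ∑' n : ℕ, (4⁻¹ : ℝ≥0∞) ^ n = 4 * 3⁻¹ := by
  rw [ENNReal.tsum_geometric]
  have hsub : (1 : ℝ≥0∞) - 4⁻¹ = 3 * 4⁻¹ := by
    refine ENNReal.sub_eq_of_eq_add (by simp) ?_
    have : (3 : ℝ≥0∞) * 4⁻¹ + 4⁻¹ = 4 * 4⁻¹ := by ring
    rw [this, ENNReal.mul_inv_cancel (by norm_num) (by norm_num)]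
  rw [hsub, ENNReal.mul_inv (by norm_num) (by norm_num), inv_inv, mul_comm]

lemma tsum_family1_body :
    ∑' L : List ℕ, (2⁻¹ : ℝ≥0∞) ^ ((L.map (· + 3)).sum) = 4 * 3⁻¹ := by
  have h : ∑' L : List ℕ, (2⁻¹ : ℝ≥0∞) ^ ((L.map (· + 3)).sum)
      = ∑' L : List ℕ, (L.map fun b => (2⁻¹ : ℝ≥0∞) ^ (b + 3)).prod :=
    tsum_congr fun L => pow_list_sum (2⁻¹ : ℝ≥0∞) (· + 3) L
  rw [h, tsum_list (fun b => (2⁻¹ : ℝ≥0∞) ^ (b + 3)), tsum_b, geom_quarter]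

end CoinAux

namespace CoinAux
open Coin MeasureTheory ProbabilityTheory
open scoped ENNReal

lemma cyl_win {Ω : Type*} {ξ : ℕ → Ω → Coin} {P Q R v : List Coin} (hv : v ≠ [])
    (h1 : P <:+: H :: v) (h2 : ¬ P <:+: (H :: v).dropLast)
    (h3 : ¬ Q <:+: H :: v) (h4 : ¬ R <:+: H :: v)
    {ω : Ω} (hc : ω ∈ Cyl ξ v)
    (hQ : ∃ k, Q <:+: obsWord [H] ξ k ω) (hR : ∃ k, R <:+: obsWord [H] ξ k ω) :
    hitTime [H] P ξ ω = v.length ∧ v.length < hitTime [H] Q ξ ω ∧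
      v.length < hitTime [H] R ξ ω :=
  ⟨hit_eq hv h1 h2 hc, hit_gt h3 hc hQ, hit_gt h4 hc hR⟩

/-! ### The three families of winning cylinders -/

def W1 (p : List ℕ × ℕ) : List Coin := T :: T :: body1 p.1 p.2

lemma HW1 (p : List ℕ × ℕ) : H :: W1 p = u1 p.1 p.2 := rfl

lemma W1_length (p : List ℕ × ℕ) : (W1 p).length = 4 + p.2 + (p.1.map (· + 3)).sum := by
  have h1 := u1_length p.1 p.2
  have h2 : (u1 p.1 p.2).length = (W1 p).length + 1 := by rw [← HW1]; rfl
  omega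

lemma W1_ne_nil (p : List ℕ × ℕ) : W1 p ≠ [] := by simp [W1]

lemma W1_inj : Function.Injective W1 := by
  intro p q h
  have h2 : u1 p.1 p.2 = u1 q.1 q.2 := by rw [← HW1, ← HW1, h]
  obtain ⟨ha, hb⟩ := u1_inj h2
  exact Prod.ext ha hb

lemma W1_e1 (p : List ℕ × ℕ) : pTHH <:+: H :: W1 p := by
  obtain ⟨s, hs⟩ := u1_thh p.1 p.2
  rw [HW1, hs]
  exact ⟨s, [], by simp⟩

lemma W1_e2 (p : List ℕ × ℕ) : ¬ pTHH <:+: (H :: W1 p).dropLast := by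
  rw [HW1]; exact u1_dropLast_not_thh _ _

lemma W1_e3 (p : List ℕ × ℕ) : ¬ pHTH <:+: H :: W1 p := by
  rw [HW1]; exact u1_not_hth _ _

lemma W1_e4 (p : List ℕ × ℕ) : ¬ pHHT <:+: H :: W1 p := by
  rw [HW1]; exact u1_not_hht _ _

def W2 (p : List ℕ × ℕ) : List Coin := T :: T :: body2 p.1 p.2

lemma HW2 (p : List ℕ × ℕ) : H :: W2 p = u2 p.1 p.2 := rfl

lemma W2_length (p : List ℕ × ℕ) : (W2 p).length = 5 + p.2 + (p.1.map (· + 3)).sum := by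
  have h1 := u2_length p.1 p.2
  have h2 : (u2 p.1 p.2).length = (W2 p).length + 1 := by rw [← HW2]; rfl
  omega

lemma W2_ne_nil (p : List ℕ × ℕ) : W2 p ≠ [] := by simp [W2]

lemma W2_inj : Function.Injective W2 := by
  intro p q h
  have h2 : u2 p.1 p.2 = u2 q.1 q.2 := by rw [← HW2, ← HW2, h]
  obtain ⟨ha, hb⟩ := u2_inj h2
  exact Prod.ext ha hb

lemma W2_e1 (p : List ℕ × ℕ) : pHTH <:+: H :: W2 p := by
  obtain ⟨s, hs⟩ := u2_hth p.1 p.2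
  rw [HW2, hs]
  exact ⟨s, [], by simp⟩

lemma W2_e2 (p : List ℕ × ℕ) : ¬ pHTH <:+: (H :: W2 p).dropLast := by
  rw [HW2]; exact u2_dropLast_not_hth _ _

lemma W2_e3 (p : List ℕ × ℕ) : ¬ pTHH <:+: H :: W2 p := by
  rw [HW2]; exact u2_not_thh _ _

lemma W2_e4 (p : List ℕ × ℕ) : ¬ pHHT <:+: H :: W2 p := by
  rw [HW2]; exact u2_not_hht _ _

def W3 (n : ℕ) : List Coin := List.replicate (n+1) H ++ [T]

lemma HW3 (n : ℕ) : H :: W3 n = u3 n := rfl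

lemma W3_length (n : ℕ) : (W3 n).length = n + 2 := by simp [W3]

lemma W3_ne_nil (n : ℕ) : W3 n ≠ [] := by simp [W3]

lemma W3_inj : Function.Injective W3 := by
  intro m n h
  have := congrArg List.length h
  rw [W3_length, W3_length] at this
  omega

lemma W3_e1 (n : ℕ) : pHHT <:+: H :: W3 n := by
  obtain ⟨s, hs⟩ := u3_hht n
  rw [HW3, hs]
  exact ⟨s, [], by simp⟩

lemma W3_e2 (n : ℕ) : ¬ pHHT <:+: (H :: W3 n).dropLast := by
  rw [HW3]; exact u3_dropLast_not_hht _

lemma W3_e3 (n : ℕ) : ¬ pTHH <:+: H :: W3 n := by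
  rw [HW3]; exact u3_not_thh _

lemma W3_e4 (n : ℕ) : ¬ pHTH <:+: H :: W3 n := by
  rw [HW3]; exact u3_not_hth _

/-! the extra cylinder [T, H] for family 2 -/

lemma TH_e1 : pHTH <:+: H :: [T, H] := by decide
lemma TH_e2 : ¬ pHTH <:+: (H :: [T, H]).dropLast := by decide
lemma TH_e3 : ¬ pTHH <:+: H :: [T, H] := by decide
lemma TH_e4 : ¬ pHHT <:+: H :: [T, H] := by decide

lemma TH_not_prefix_W2 (p : List ℕ × ℕ) : ¬ [T, H] <+: W2 p := by
  intro h
  exact Coin.noConfusion (List.cons_prefix_cons.1 (List.cons_prefix_cons.1 h).2).1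

lemma W2_not_prefix_TH (p : List ℕ × ℕ) : ¬ W2 p <+: [T, H] := by
  intro h
  have h1 := h.length_le
  have h2 := W2_length p
  simp at h1
  omega

/-! ### tsum evaluations for the families -/

lemma tsum_family (c : ℕ) :
    ∑' p : List ℕ × ℕ, (2⁻¹ : ℝ≥0∞) ^ (c + p.2 + (p.1.map (· + 3)).sum)
      = ((2⁻¹ : ℝ≥0∞) ^ c * 2) * (4 * 3⁻¹) := by
  rw [ENNReal.tsum_prod']
  have hin : ∀ L : List ℕ, ∑' a : ℕ, (2⁻¹ : ℝ≥0∞) ^ (c + a + (L.map (· + 3)).sum)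
      = ((2⁻¹ : ℝ≥0∞) ^ c * 2) * 2⁻¹ ^ ((L.map (· + 3)).sum) := by
    intro L
    have h : ∀ a : ℕ, (2⁻¹ : ℝ≥0∞) ^ (c + a + (L.map (· + 3)).sum)
        = ((2⁻¹ : ℝ≥0∞) ^ c * 2⁻¹ ^ ((L.map (· + 3)).sum)) * 2⁻¹ ^ a := by
      intro a; rw [pow_add, pow_add]; ring
    rw [tsum_congr h, ENNReal.tsum_mul_left, geom_half]
    ring
  rw [tsum_congr hin, ENNReal.tsum_mul_left, tsum_family1_body]

lemma num1 : (((2⁻¹ : ℝ≥0∞) ^ 4 * 2) * (4 * 3⁻¹)) = 1 / 6 := by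
  calc ((2⁻¹ : ℝ≥0∞) ^ 4 * 2) * (4 * 3⁻¹)
      = (2⁻¹*2)*((2⁻¹*2)*((2⁻¹*2)*(2⁻¹*3⁻¹))) := by ring
    _ = 2⁻¹*3⁻¹ := by rw [h21]; ring
    _ = (2*3 : ℝ≥0∞)⁻¹ := (ENNReal.mul_inv (by norm_num) (by norm_num)).symm
    _ = 1 / 6 := by norm_num [one_div]

lemma num2 : (2⁻¹ : ℝ≥0∞) ^ 2 + ((2⁻¹ : ℝ≥0∞) ^ 5 * 2) * (4 * 3⁻¹) = 1 / 3 := by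
  have h3c : (3 : ℝ≥0∞) * 3⁻¹ = 1 := ENNReal.mul_inv_cancel (by norm_num) (by norm_num)
  have h4c : (4 : ℝ≥0∞) * 4⁻¹ = 1 := ENNReal.mul_inv_cancel (by norm_num) (by norm_num)
  have hsq : (2⁻¹ : ℝ≥0∞) ^ 2 = 4⁻¹ := by
    rw [sq, ← ENNReal.mul_inv (by norm_num) (by norm_num)]
    norm_num
  have hsnd : ((2⁻¹ : ℝ≥0∞) ^ 5 * 2) * (4 * 3⁻¹) = 4⁻¹ * 3⁻¹ := by
    calc ((2⁻¹ : ℝ≥0∞) ^ 5 * 2) * (4 * 3⁻¹)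
        = (2⁻¹*2)*((2⁻¹*2)*((2⁻¹*2)*(2⁻¹ ^ 2 * 3⁻¹))) := by ring
      _ = 2⁻¹ ^ 2 * 3⁻¹ := by rw [h21]; ring
      _ = 4⁻¹ * 3⁻¹ := by rw [hsq]
  rw [hsq, hsnd]
  have h12 : ((4 : ℝ≥0∞) * 3⁻¹) * 4⁻¹ = 3⁻¹ := by
    calc ((4 : ℝ≥0∞) * 3⁻¹) * 4⁻¹ = 3⁻¹ * (4 * 4⁻¹) := by ring
      _ = 3⁻¹ := by rw [h4c, mul_one]
  calc (4⁻¹ : ℝ≥0∞) + 4⁻¹ * 3⁻¹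
      = (3*3⁻¹)*4⁻¹ + 4⁻¹ * 3⁻¹ := by rw [h3c, one_mul]
    _ = 3⁻¹ * (4 * 4⁻¹) := by ring
    _ = 3⁻¹ := by rw [h4c, mul_one]
    _ = 1 / 3 := (one_div (3 : ℝ≥0∞)).symm

lemma num3 : ∑' n : ℕ, (2⁻¹ : ℝ≥0∞) ^ (n + 2) = 1 / 2 := by
  have h : ∀ n : ℕ, (2⁻¹ : ℝ≥0∞) ^ (n + 2) = 2⁻¹ ^ n * 2⁻¹ ^ 2 := fun n => pow_add _ _ _
  rw [tsum_congr h, ENNReal.tsum_mul_right, geom_half]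
  calc (2 : ℝ≥0∞) * 2⁻¹ ^ 2 = (2⁻¹ * 2) * 2⁻¹ := by ring
    _ = 2⁻¹ := by rw [h21, one_mul]
    _ = 1 / 2 := (one_div (2 : ℝ≥0∞)).symm

lemma sum1 : ∑' p : List ℕ × ℕ, (2⁻¹ : ℝ≥0∞) ^ (W1 p).length = 1 / 6 := by
  rw [tsum_congr fun p => by rw [W1_length p], tsum_family 4, num1]

lemma sum2 : (2⁻¹ : ℝ≥0∞) ^ 2 + ∑' p : List ℕ × ℕ, (2⁻¹ : ℝ≥0∞) ^ (W2 p).length = 1 / 3 := by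
  rw [tsum_congr fun p => by rw [W2_length p], tsum_family 5, num2]

lemma sum3 : ∑' n : ℕ, (2⁻¹ : ℝ≥0∞) ^ (W3 n).length = 1 / 2 := by
  rw [tsum_congr fun n => by rw [W3_length n], num3]

end CoinAux

namespace CoinAux
open Coin MeasureTheory ProbabilityTheory
open scoped ENNReal

lemma measurableSet_eq_nat {Ω : Type*} [MeasurableSpace Ω] {f g : Ω → ℕ}
    (hf : Measurable f) (hg : Measurable g) : MeasurableSet {ω | f ω = g ω} := by
  have h : {ω | f ω = g ω} = ⋃ n : ℕ, f ⁻¹' {n} ∩ g ⁻¹' {n} := by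
    ext ω
    simp only [Set.mem_setOf_eq, Set.mem_iUnion, Set.mem_inter_iff, Set.mem_preimage,
      Set.mem_singleton_iff]
    constructor
    · intro h; exact ⟨g ω, h, rfl⟩
    · rintro ⟨n, h1, h2⟩; rw [h1, h2]
  rw [h]
  exact MeasurableSet.iUnion fun n =>
    (hf (measurableSet_singleton n)).inter (hg (measurableSet_singleton n))

lemma main_aux {Ω : Type*} [MeasurableSpace Ω] (μ : MeasureTheory.Measure Ω)
    [IsProbabilityMeasure μ]
    (ξ : ℕ → Ω → Coin) (hmeas : ∀ n, Measurable (ξ n))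
    (hindep : iIndepFun ξ μ)
    (hdist : ∀ n c, μ {ω | ξ n ω = c} = 1 / 2)
    (hfin : μ {ω | (∃ k, pTHH <:+: obsWord [H] ξ k ω) ∧
        (∃ k, pHTH <:+: obsWord [H] ξ k ω) ∧
        (∃ k, pHHT <:+: obsWord [H] ξ k ω)} = 1) :
    μ {ω | min (min (hitTime [H] pTHH ξ ω) (hitTime [H] pHTH ξ ω)) (hitTime [H] pHHT ξ ω)
        = hitTime [H] pTHH ξ ω} = 1 / 6 ∧
    μ {ω | min (min (hitTime [H] pTHH ξ ω) (hitTime [H] pHTH ξ ω)) (hitTime [H] pHHT ξ ω)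
        = hitTime [H] pHTH ξ ω} = 1 / 3 ∧
    μ {ω | min (min (hitTime [H] pTHH ξ ω) (hitTime [H] pHTH ξ ω)) (hitTime [H] pHHT ξ ω)
        = hitTime [H] pHHT ξ ω} = 1 / 2 := by
  classical
  set F : Set Ω := {ω | (∃ k, pTHH <:+: obsWord [H] ξ k ω) ∧
      (∃ k, pHTH <:+: obsWord [H] ξ k ω) ∧
      (∃ k, pHHT <:+: obsWord [H] ξ k ω)} with hFdef
  set A1 : Set Ω := {ω | min (min (hitTime [H] pTHH ξ ω) (hitTime [H] pHTH ξ ω))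
      (hitTime [H] pHHT ξ ω) = hitTime [H] pTHH ξ ω} with hA1def
  set A2 : Set Ω := {ω | min (min (hitTime [H] pTHH ξ ω) (hitTime [H] pHTH ξ ω))
      (hitTime [H] pHHT ξ ω) = hitTime [H] pHTH ξ ω} with hA2def
  set A3 : Set Ω := {ω | min (min (hitTime [H] pTHH ξ ω) (hitTime [H] pHTH ξ ω))
      (hitTime [H] pHHT ξ ω) = hitTime [H] pHHT ξ ω} with hA3def
  have hFm : MeasurableSet F := by
    have hFeq : F = (⋃ k, {ω : Ω | pTHH <:+: obsWord [H] ξ k ω}) ∩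
        ((⋃ k, {ω : Ω | pHTH <:+: obsWord [H] ξ k ω}) ∩
          (⋃ k, {ω : Ω | pHHT <:+: obsWord [H] ξ k ω})) := by
      rw [hFdef]
      ext ω
      simp only [Set.mem_setOf_eq, Set.mem_inter_iff, Set.mem_iUnion]
    rw [hFeq]
    exact (MeasurableSet.iUnion fun k => measurable_infix_event hmeas _ k).inter
      ((MeasurableSet.iUnion fun k => measurable_infix_event hmeas _ k).inter
        (MeasurableSet.iUnion fun k => measurable_infix_event hmeas _ k))
  have hFc : μ Fᶜ = 0 := by
    rw [measure_compl hFm (measure_ne_top μ F), hfin, measure_univ, tsub_self]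
  have hm1 : Measurable (hitTime [H] pTHH ξ) := measurable_hitTime hmeas _
  have hm2 : Measurable (hitTime [H] pHTH ξ) := measurable_hitTime hmeas _
  have hm3 : Measurable (hitTime [H] pHHT ξ) := measurable_hitTime hmeas _
  have hmg : Measurable (fun ω => min (min (hitTime [H] pTHH ξ ω) (hitTime [H] pHTH ξ ω))
      (hitTime [H] pHHT ξ ω)) := measurable_min_nat (measurable_min_nat hm1 hm2) hm3
  have hA1m : MeasurableSet A1 := measurableSet_eq_nat hmg hm1
  have hA2m : MeasurableSet A2 := measurableSet_eq_nat hmg hm2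
  have hA3m : MeasurableSet A3 := measurableSet_eq_nat hmg hm3
  -- lower bound for A1
  have hb1 : 1 / 6 ≤ μ A1 := by
    have hsub : (⋃ p : List ℕ × ℕ, Cyl ξ (W1 p)) ∩ F ⊆ A1 := by
      rintro ω ⟨hU, hFω⟩
      obtain ⟨p, hp⟩ := Set.mem_iUnion.1 hU
      obtain ⟨e1, e2, e3⟩ := cyl_win (W1_ne_nil p) (W1_e1 p) (W1_e2 p) (W1_e3 p) (W1_e4 p)
        hp hFω.2.1 hFω.2.2
      have hle2 : hitTime [H] pTHH ξ ω ≤ hitTime [H] pHTH ξ ω := by omega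
      have hle3 : hitTime [H] pTHH ξ ω ≤ hitTime [H] pHHT ξ ω := by omega
      simp only [hA1def, Set.mem_setOf_eq]
      rw [min_eq_left hle2, min_eq_left hle3]
    have hU1 : μ (⋃ p : List ℕ × ℕ, Cyl ξ (W1 p)) = 1 / 6 := by
      rw [measure_iUnion (family_pairwise W1_inj W1_e1 W1_e2) (fun p => cyl_measurable hmeas _),
        tsum_congr fun p => cyl_prob hindep hdist (W1 p), sum1]
    calc (1 : ℝ≥0∞) / 6 = μ ((⋃ p : List ℕ × ℕ, Cyl ξ (W1 p)) ∩ F) := by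
          rw [inter_ae_eq hFc, hU1]
      _ ≤ μ A1 := measure_mono hsub
  -- lower bound for A2
  have hb2 : 1 / 3 ≤ μ A2 := by
    have hsub : (Cyl ξ ([T, H] : List Coin) ∪ ⋃ p : List ℕ × ℕ, Cyl ξ (W2 p)) ∩ F ⊆ A2 := by
      rintro ω ⟨hU, hFω⟩
      have key : hitTime [H] pHTH ξ ω ≤ hitTime [H] pTHH ξ ω ∧
          hitTime [H] pHTH ξ ω ≤ hitTime [H] pHHT ξ ω := by
        rcases hU with hTH | hU
        · obtain ⟨e1, e2, e3⟩ := cyl_win (by simp) TH_e1 TH_e2 TH_e3 TH_e4 hTH hFω.1 hFω.2.2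
          omega
        · obtain ⟨p, hp⟩ := Set.mem_iUnion.1 hU
          obtain ⟨e1, e2, e3⟩ := cyl_win (W2_ne_nil p) (W2_e1 p) (W2_e2 p) (W2_e3 p) (W2_e4 p)
            hp hFω.1 hFω.2.2
          omega
      simp only [hA2def, Set.mem_setOf_eq]
      rw [min_eq_right key.1, min_eq_left key.2]
    have hdisj : Disjoint (Cyl ξ ([T, H] : List Coin)) (⋃ p : List ℕ × ℕ, Cyl ξ (W2 p)) :=
      Set.disjoint_iUnion_right.2 fun p => cyl_disjoint (TH_not_prefix_W2 p) (W2_not_prefix_TH p)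
    have hU2 : μ (Cyl ξ ([T, H] : List Coin) ∪ ⋃ p : List ℕ × ℕ, Cyl ξ (W2 p)) = 1 / 3 := by
      rw [measure_union hdisj (MeasurableSet.iUnion fun p => cyl_measurable hmeas _),
        measure_iUnion (family_pairwise W2_inj W2_e1 W2_e2) (fun p => cyl_measurable hmeas _),
        tsum_congr fun p => cyl_prob hindep hdist (W2 p), cyl_prob hindep hdist ([T, H] : List Coin)]
      simpa using sum2
    calc (1 : ℝ≥0∞) / 3
        = μ ((Cyl ξ ([T, H] : List Coin) ∪ ⋃ p : List ℕ × ℕ, Cyl ξ (W2 p)) ∩ F) := by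
          rw [inter_ae_eq hFc, hU2]
      _ ≤ μ A2 := measure_mono hsub
  -- lower bound for A3
  have hb3 : 1 / 2 ≤ μ A3 := by
    have hsub : (⋃ n : ℕ, Cyl ξ (W3 n)) ∩ F ⊆ A3 := by
      rintro ω ⟨hU, hFω⟩
      obtain ⟨n, hp⟩ := Set.mem_iUnion.1 hU
      obtain ⟨e1, e2, e3⟩ := cyl_win (W3_ne_nil n) (W3_e1 n) (W3_e2 n) (W3_e3 n) (W3_e4 n)
        hp hFω.1 hFω.2.1
      have hle1 : hitTime [H] pHHT ξ ω ≤ hitTime [H] pTHH ξ ω := by omega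
      have hle2 : hitTime [H] pHHT ξ ω ≤ hitTime [H] pHTH ξ ω := by omega
      simp only [hA3def, Set.mem_setOf_eq]
      rw [min_eq_right (le_min hle1 hle2)]
    have hU3 : μ (⋃ n : ℕ, Cyl ξ (W3 n)) = 1 / 2 := by
      rw [measure_iUnion (family_pairwise W3_inj W3_e1 W3_e2) (fun n => cyl_measurable hmeas _),
        tsum_congr fun n => cyl_prob hindep hdist (W3 n), sum3]
    calc (1 : ℝ≥0∞) / 2 = μ ((⋃ n : ℕ, Cyl ξ (W3 n)) ∩ F) := by
          rw [inter_ae_eq hFc, hU3]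
      _ ≤ μ A3 := measure_mono hsub
  -- the three events are pairwise null
  have hnull12 : μ (A1 ∩ A2) = 0 := by
    refine measure_mono_null ?_ hFc
    rintro ω ⟨h1, h2⟩
    simp only [hA1def, hA2def, Set.mem_setOf_eq] at h1 h2
    simp only [Set.mem_compl_iff]
    intro hFω
    exact hit_ne (by decide) (by decide) (by decide) hFω.1 hFω.2.1 (h1.symm.trans h2)
  have hnull13 : μ (A1 ∩ A3) = 0 := by
    refine measure_mono_null ?_ hFc
    rintro ω ⟨h1, h2⟩
    simp only [hA1def, hA3def, Set.mem_setOf_eq] at h1 h2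
    simp only [Set.mem_compl_iff]
    intro hFω
    exact hit_ne (by decide) (by decide) (by decide) hFω.1 hFω.2.2 (h1.symm.trans h2)
  have hnull23 : μ (A2 ∩ A3) = 0 := by
    refine measure_mono_null ?_ hFc
    rintro ω ⟨h1, h2⟩
    simp only [hA2def, hA3def, Set.mem_setOf_eq] at h1 h2
    simp only [Set.mem_compl_iff]
    intro hFω
    exact hit_ne (by decide) (by decide) (by decide) hFω.2.1 hFω.2.2 (h1.symm.trans h2)
  -- the three events cover
  have hcover : A1 ∪ A2 ∪ A3 = Set.univ := by
    ext ω
    simp only [hA1def, hA2def, hA3def, Set.mem_union, Set.mem_setOf_eq, Set.mem_univ, iff_true]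
    rcases min_cases (min (hitTime [H] pTHH ξ ω) (hitTime [H] pHTH ξ ω))
      (hitTime [H] pHHT ξ ω) with ⟨h, -⟩ | ⟨h, -⟩
    · rcases min_cases (hitTime [H] pTHH ξ ω) (hitTime [H] pHTH ξ ω) with ⟨h', -⟩ | ⟨h', -⟩
      · exact Or.inl (Or.inl (by rw [h, h']))
      · exact Or.inl (Or.inr (by rw [h, h']))
    · exact Or.inr h
  have htot : μ A1 + μ A2 + μ A3 = 1 := by
    have e12 := measure_union_add_inter (μ := μ) A1 hA2m
    have e123 := measure_union_add_inter (μ := μ) (A1 ∪ A2) hA3m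
    have hint3 : μ ((A1 ∪ A2) ∩ A3) = 0 := by
      rw [Set.union_inter_distrib_right]
      exact measure_union_null hnull13 hnull23
    calc μ A1 + μ A2 + μ A3 = (μ (A1 ∪ A2) + μ (A1 ∩ A2)) + μ A3 := by rw [e12]
      _ = μ (A1 ∪ A2) + μ A3 := by rw [hnull12, add_zero]
      _ = μ (A1 ∪ A2 ∪ A3) + μ ((A1 ∪ A2) ∩ A3) := e123.symm
      _ = 1 := by rw [hint3, add_zero, hcover, measure_univ]
  have fin1 : μ A1 ≠ ⊤ := measure_ne_top μ _
  have fin2 : μ A2 ≠ ⊤ := measure_ne_top μ _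
  have fin3 : μ A3 ≠ ⊤ := measure_ne_top μ _
  have hf16 : ((1 : ℝ≥0∞) / 6) ≠ ⊤ := by rw [one_div]; exact ENNReal.inv_ne_top.2 (by norm_num)
  have hf13 : ((1 : ℝ≥0∞) / 3) ≠ ⊤ := by rw [one_div]; exact ENNReal.inv_ne_top.2 (by norm_num)
  have hf12 : ((1 : ℝ≥0∞) / 2) ≠ ⊤ := by rw [one_div]; exact ENNReal.inv_ne_top.2 (by norm_num)
  have ht16 : ((1 : ℝ≥0∞) / 6).toReal = 1 / 6 := by rw [ENNReal.toReal_div]; norm_num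
  have ht13 : ((1 : ℝ≥0∞) / 3).toReal = 1 / 3 := by rw [ENNReal.toReal_div]; norm_num
  have ht12 : ((1 : ℝ≥0∞) / 2).toReal = 1 / 2 := by rw [ENNReal.toReal_div]; norm_num
  have hx1 : (1 : ℝ) / 6 ≤ (μ A1).toReal := by
    rw [← ht16]; exact ENNReal.toReal_mono fin1 hb1
  have hx2 : (1 : ℝ) / 3 ≤ (μ A2).toReal := by
    rw [← ht13]; exact ENNReal.toReal_mono fin2 hb2
  have hx3 : (1 : ℝ) / 2 ≤ (μ A3).toReal := by
    rw [← ht12]; exact ENNReal.toReal_mono fin3 hb3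
  have hsumR : (μ A1).toReal + (μ A2).toReal + (μ A3).toReal = 1 := by
    rw [← ENNReal.toReal_add fin1 fin2,
      ← ENNReal.toReal_add (ENNReal.add_ne_top.2 ⟨fin1, fin2⟩) fin3, htot, ENNReal.toReal_one]
  refine ⟨?_, ?_, ?_⟩
  · exact (ENNReal.toReal_eq_toReal_iff' fin1 hf16).1 (by rw [ht16]; linarith)
  · exact (ENNReal.toReal_eq_toReal_iff' fin2 hf13).1 (by rw [ht13]; linarith)
  · exact (ENNReal.toReal_eq_toReal_iff' fin3 hf12).1 (by rw [ht12]; linarith)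

end CoinAux

/-- For i.i.d. fair coin tosses, the patterns `B₁ = THH`, `B₂ = HTH`, `B₃ = HHT`, and the
initial pattern `A = H`: `Pr(τ = τ₁) = 1/6`, `Pr(τ = τ₂) = 1/3`, `Pr(τ = τ₃) = 1/2`. -/
theorem coin_example_initial_H
    {Ω : Type*} [MeasurableSpace Ω] (μ : Measure Ω) [IsProbabilityMeasure μ]
    (ξ : ℕ → Ω → Coin) (hmeas : ∀ n, Measurable (ξ n))
    (hindep : iIndepFun ξ μ)
    (hdist : ∀ n c, μ {ω | ξ n ω = c} = 1 / 2)
    (A : List Coin) (hA : A = [Coin.H])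
    (τ₁ τ₂ τ₃ τ : Ω → ℕ)
    (hτ₁ : τ₁ = hitTime A ([Coin.T, Coin.H, Coin.H]) ξ)
    (hτ₂ : τ₂ = hitTime A ([Coin.H, Coin.T, Coin.H]) ξ)
    (hτ₃ : τ₃ = hitTime A ([Coin.H, Coin.H, Coin.T]) ξ)
    (hτ : τ = fun ω => min (min (τ₁ ω) (τ₂ ω)) (τ₃ ω))
    (hfin : μ {ω | (∃ k, [Coin.T, Coin.H, Coin.H] <:+: obsWord A ξ k ω) ∧
        (∃ k, [Coin.H, Coin.T, Coin.H] <:+: obsWord A ξ k ω) ∧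
        (∃ k, [Coin.H, Coin.H, Coin.T] <:+: obsWord A ξ k ω)} = 1) :
    μ {ω | τ ω = τ₁ ω} = 1 / 6 ∧ μ {ω | τ ω = τ₂ ω} = 1 / 3 ∧
      μ {ω | τ ω = τ₃ ω} = 1 / 2 := by
  subst hA hτ₁ hτ₂ hτ₃ hτ
  exact CoinAux.main_aux μ ξ hmeas hindep hdist hfin
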